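/- For all α ∈ (0; π), the inequality α - sin α ≥ α³/π² holds. -/

import Mathlib

open Real

private lemma my_sin_le {x : ℝ} (hx : 0 ≤ x) : Real.sin x ≤ x := by
  rcases hx.eq_or_lt with h | h
  · simp [← h]
  · exact (Real.sin_lt h).le

private lemma mono_aux {f : ℝ → ℝ} {f' : ℝ → ℝ}
    (hd : ∀ y, HasDerivAt f (f' y) y) (hpos : ∀ y, 0 ≤ y → 0 ≤ f' y)
    {x : ℝ} (hx : 0 ≤ x) : f 0 ≤ f x := by
  have h : MonotoneOn f (Set.Ici (0:ℝ)) := by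
    apply monotoneOn_of_deriv_nonneg (convex_Ici 0)
    · exact fun y _ => (hd y).continuousAt.continuousWithinAt
    · exact fun y _ => (hd y).differentiableAt.differentiableWithinAt
    · intro y hy
      rw [interior_Ici] at hy
      rw [(hd y).deriv]
      exact hpos y hy.le
  exact h Set.self_mem_Ici hx hx

private lemma sin_ge_cubic {x : ℝ} (hx : 0 ≤ x) : x - x ^ 3 / 6 ≤ Real.sin x := by
  have := mono_aux (f := fun y => Real.sin y - (y - y ^ 3 / 6))
    (f' := fun y => Real.cos y - (1 - 3 * y ^ 2 / 6))
    (fun y => by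
      have := (Real.hasDerivAt_sin y).sub
        ((hasDerivAt_id y).sub (((hasDerivAt_pow 3 y).div_const 6)))
      norm_num at this ⊢
      convert this using 1 <;> rfl)
    (fun y _ => by nlinarith [Real.one_sub_sq_div_two_le_cos (x := y)]) hx
  simp at this
  linarith

private lemma cos_le_quartic (x : ℝ) : Real.cos x ≤ 1 - x ^ 2 / 2 + x ^ 4 / 24 := by
  have key : ∀ z : ℝ, 0 ≤ z → Real.cos z ≤ 1 - z ^ 2 / 2 + z ^ 4 / 24 := by
    intro z hz
    have := mono_aux (f := fun y => 1 - y ^ 2 / 2 + y ^ 4 / 24 - Real.cos y)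
      (f' := fun y => (0 - 2 * y / 2 + 4 * y ^ 3 / 24) - (-Real.sin y))
      (fun y => by
        have := ((((hasDerivAt_const y (1:ℝ)).sub ((hasDerivAt_pow 2 y).div_const 2)).add
          ((hasDerivAt_pow 4 y).div_const 24)).sub (Real.hasDerivAt_cos y))
        norm_num at this ⊢
        convert this using 1 <;> rfl)
      (fun y hy => by nlinarith [sin_ge_cubic hy]) hz
    simp at this
    linarith
  rcases le_total 0 x with hx | hx
  · exact key x hx
  · have h := key (-x) (by linarith)
    rw [Real.cos_neg] at h
    nlinarith [h]

private lemma sin_le_quintic {x : ℝ} (hx : 0 ≤ x) :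
    Real.sin x ≤ x - x ^ 3 / 6 + x ^ 5 / 120 := by
  have := mono_aux (f := fun y => y - y ^ 3 / 6 + y ^ 5 / 120 - Real.sin y)
    (f' := fun y => (1 - 3 * y ^ 2 / 6 + 5 * y ^ 4 / 120) - Real.cos y)
    (fun y => by
      have := (((hasDerivAt_id y).sub ((hasDerivAt_pow 3 y).div_const 6)).add
        ((hasDerivAt_pow 5 y).div_const 120)).sub (Real.hasDerivAt_sin y)
      norm_num at this ⊢
      convert this using 1 <;> rfl)
    (fun y _ => by nlinarith [cos_le_quartic y]) hx
  simp at this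
  linarith

theorem stmt_7 (α : ℝ) (h0 : 0 < α) (h1 : α < π) :
    α - Real.sin α ≥ α^3 / π^2 := by
  have hπ1 : (3.141592 : ℝ) < π := Real.pi_gt_d6
  have hπ2 : π < 3.141593 := Real.pi_lt_d6
  have hπ0 : (0:ℝ) < π ^ 2 := by positivity
  have hπlo : (9.8696 : ℝ) < π ^ 2 := by nlinarith
  have hπhi : π ^ 2 < (9.8697 : ℝ) := by nlinarith
  rw [ge_iff_le, div_le_iff₀ hπ0]
  rcases le_total α 2 with hc | hc
  · have hs := sin_le_quintic h0.le
    have hα2 : α ^ 2 ≤ 4 := by nlinarith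
    have h5 : α ^ 5 ≤ 4 * α ^ 3 := by
      nlinarith [mul_le_mul_of_nonneg_left hα2 (pow_pos h0 3).le]
    have hlow : α - Real.sin α ≥ α ^ 3 * (2 / 15) := by nlinarith
    nlinarith [pow_pos h0 3, mul_le_mul_of_nonneg_right hπlo.le (by positivity : (0:ℝ) ≤ α ^ 3)]
  · have hs : Real.sin α ≤ π - α := by
      have : Real.sin (π - α) ≤ π - α := my_sin_le (by linarith)
      rwa [Real.sin_pi_sub] at this
    have h2 : α ^ 2 + π * α - π ^ 2 ≥ 0 := by nlinarith
    have k2 : π ^ 2 * (2 * α - π) ≥ α ^ 3 := by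
      nlinarith [mul_nonneg (sub_nonneg.mpr h1.le) h2]
    have k1 : π ^ 2 * (2 * α - π) ≤ π ^ 2 * (α - Real.sin α) :=
      mul_le_mul_of_nonneg_left (by linarith) hπ0.le
    linarith
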